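/- For every Borel probability measure P on Ω, the set S_P = { Q : Q is a Borel probability measure on Ω with Q ≼ P } is a closed, and hence compact, subset of the space of Borel probability measures on Ω equipped with the topology of weak convergence. -/

import Mathlib

open MeasureTheory
open scoped ENNReal

/-- `Q` can be coupled below `P`: there is a probability measure `R` on `Ω × Ω`
with first marginal `Q`, second marginal `P`, concentrated on pairs `(ω, ω')`
with `ω ≤ ω'` coordinatewise. -/
def CoupledBelow (Q P : Measure (ℕ → Bool)) : Prop :=
  ∃ R : Measure ((ℕ → Bool) × (ℕ → Bool)), IsProbabilityMeasure R ∧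
    R.map Prod.fst = Q ∧ R.map Prod.snd = P ∧
    R {q : (ℕ → Bool) × (ℕ → Bool) | q.1 ≤ q.2} = 1



open MeasureTheory Filter Topology Set
open scoped ENNReal NNReal

namespace CantorAux

/-- Restriction of a sequence to its first `n` coordinates. -/
def restr (n : ℕ) (ω : ℕ → Bool) : Fin n → Bool := fun i => ω i

lemma continuous_restr (n : ℕ) : Continuous (restr n) :=
  continuous_pi fun i => continuous_apply _

lemma measurable_restr (n : ℕ) : Measurable (restr n) :=
  measurable_pi_lambda _ fun i => measurable_pi_apply _

/-- Cylinder set determined by the first `n` coordinates. -/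
def cylF {n : ℕ} (v : Fin n → Bool) : Set (ℕ → Bool) := restr n ⁻¹' {v}

lemma mem_cylF {n : ℕ} {v : Fin n → Bool} {ω : ℕ → Bool} :
    ω ∈ cylF v ↔ restr n ω = v := Iff.rfl

lemma measurableSet_cylF {n : ℕ} (v : Fin n → Bool) : MeasurableSet (cylF v) :=
  (measurable_restr n) (measurableSet_singleton v)

lemma cylF_zero (v : Fin 0 → Bool) : cylF v = univ := by
  ext ω; simp [mem_cylF, Subsingleton.elim (restr 0 ω) v]

lemma restr_succ (n : ℕ) (ω : ℕ → Bool) :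
    restr (n + 1) ω = Fin.snoc (restr n ω) (ω n) := by
  funext i
  refine Fin.lastCases ?_ (fun j => ?_) i
  · simp [restr, Fin.snoc_last]
  · simp [restr, Fin.snoc_castSucc]

lemma snoc_eq_iff {n : ℕ} {a : Fin n → Bool} {b : Bool} {w : Fin (n + 1) → Bool} :
    Fin.snoc a b = w ↔ a = Fin.init w ∧ b = w (Fin.last n) := by
  constructor
  · rintro rfl
    simp [Fin.init_snoc, Fin.snoc_last]
  · rintro ⟨rfl, rfl⟩
    exact Fin.snoc_init_self w

lemma mem_cylF_snoc {n : ℕ} {v : Fin n → Bool} {b : Bool} {ω : ℕ → Bool} :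
    ω ∈ cylF (Fin.snoc v b) ↔ ω ∈ cylF v ∧ ω n = b := by
  rw [mem_cylF, restr_succ]
  constructor
  · intro h
    have h1 := congrArg Fin.init h
    have h2 := congrArg (fun f => f (Fin.last n)) h
    simp only [Fin.init_snoc, Fin.snoc_last] at h1 h2
    exact ⟨h1, h2⟩
  · rintro ⟨h1, h2⟩
    rw [mem_cylF] at h1
    rw [h1, h2]

lemma cylF_eq_union {n : ℕ} (v : Fin n → Bool) :
    cylF v = cylF (Fin.snoc v false) ∪ cylF (Fin.snoc v true) := by
  ext ω
  simp only [Set.mem_union, mem_cylF_snoc]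
  cases h : ω n
  · tauto
  · tauto

lemma disjoint_cylF {n : ℕ} {v w : Fin n → Bool} (hvw : v ≠ w) :
    Disjoint (cylF v) (cylF w) := by
  rw [Set.disjoint_left]
  intro ω h1 h2
  rw [mem_cylF] at h1 h2
  exact hvw (h1 ▸ h2)

lemma snoc_false_ne_snoc_true {n : ℕ} (v : Fin n → Bool) :
    (Fin.snoc v false : Fin (n + 1) → Bool) ≠ Fin.snoc v true := by
  intro h
  have := congrArg (fun f => f (Fin.last n)) h
  simp [Fin.snoc_last] at this

/-- Splitting of a probability measure over a cylinder into its two children. -/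
lemma apply_cylF_eq {n : ℕ} (μ : ProbabilityMeasure (ℕ → Bool)) (v : Fin n → Bool) :
    μ (cylF v) = μ (cylF (Fin.snoc v false)) + μ (cylF (Fin.snoc v true)) := by
  apply ENNReal.coe_injective
  rw [ENNReal.coe_add]
  simp only [ProbabilityMeasure.ennreal_coeFn_eq_coeFn_toMeasure]
  rw [cylF_eq_union v]
  exact measure_union (disjoint_cylF (snoc_false_ne_snoc_true v)) (measurableSet_cylF _)

end CantorAux

section B
open CantorAux
open MeasureTheory Filter Topology Set
open scoped ENNReal NNReal

namespace CantorAux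

lemma exists_subseq_tendsto (μ : ℕ → ProbabilityMeasure (ℕ → Bool)) :
    ∃ φ : ℕ → ℕ, StrictMono φ ∧ ∃ p : (n : ℕ) → (Fin n → Bool) → ℝ≥0,
      ∀ n (v : Fin n → Bool),
        Tendsto (fun k => μ (φ k) (cylF v)) atTop (𝓝 (p n v)) := by
  set S : Set (Π n : ℕ, (Fin n → Bool) → ℝ≥0) :=
    univ.pi fun n => univ.pi fun _ => Icc 0 1 with hS_def
  have hS : IsCompact S :=
    isCompact_univ_pi fun n => isCompact_univ_pi fun _ => isCompact_Icc
  have hmem : ∀ k, (fun n (v : Fin n → Bool) => μ k (cylF v)) ∈ S := by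
    intro k
    rw [hS_def]
    refine Set.mem_univ_pi.mpr fun n => Set.mem_univ_pi.mpr fun v => ?_
    exact ⟨zero_le, (μ k).apply_le_one _⟩
  obtain ⟨p, -, φ, hφ, hconv⟩ := hS.tendsto_subseq hmem
  refine ⟨φ, hφ, p, fun n v => ?_⟩
  have h1 := tendsto_pi_nhds.mp hconv n
  exact tendsto_pi_nhds.mp h1 v

variable (p : (n : ℕ) → (Fin n → Bool) → ℝ≥0)

/-- Left endpoint of the interval associated to a cylinder. -/
noncomputable def lep : (n : ℕ) → (Fin n → Bool) → ℝ
  | 0, _ => 0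
  | (n+1), w => lep n (Fin.init w) +
      (if w (Fin.last n) then (p (n+1) (Fin.snoc (Fin.init w) false) : ℝ) else 0)

lemma lep_snoc_false {n : ℕ} (v : Fin n → Bool) :
    lep p (n+1) (Fin.snoc v false) = lep p n v := by
  simp [lep, Fin.init_snoc, Fin.snoc_last]

lemma lep_snoc_true {n : ℕ} (v : Fin n → Bool) :
    lep p (n+1) (Fin.snoc v true)
      = lep p n v + (p (n+1) (Fin.snoc v false) : ℝ) := by
  simp [lep, Fin.init_snoc, Fin.snoc_last]

/-- The digit expansion of a real number with respect to the interval splitting. -/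
noncomputable def dig (x : ℝ) : (n : ℕ) → Fin n → Bool
  | 0 => fun i => i.elim0
  | (n+1) => Fin.snoc (dig x n)
      (decide (lep p n (dig x n) + (p (n+1) (Fin.snoc (dig x n) false) : ℝ) ≤ x))

/-- The limit point map `[0,1) → Cantor space`. -/
noncomputable def limF (x : ℝ) : ℕ → Bool := fun n => dig p x (n+1) (Fin.last n)

lemma restr_limF (x : ℝ) : ∀ n, restr n (limF p x) = dig p x n := by
  intro n
  induction n with
  | zero => exact Subsingleton.elim _ _
  | succ n ih =>
    rw [restr_succ, ih]
    have h2 : limF p x n = decide (lep p n (dig p x n)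
        + (p (n+1) (Fin.snoc (dig p x n) false) : ℝ) ≤ x) := by
      show (Fin.snoc (dig p x n) (decide (lep p n (dig p x n)
        + (p (n+1) (Fin.snoc (dig p x n) false) : ℝ) ≤ x)) : Fin (n+1) → Bool) (Fin.last n) = _
      rw [Fin.snoc_last]
    rw [h2]
    rfl

variable (hp0 : ∀ v : Fin 0 → Bool, p 0 v = 1)
variable (hpadd : ∀ (n : ℕ) (v : Fin n → Bool),
    p n v = p (n+1) (Fin.snoc v false) + p (n+1) (Fin.snoc v true))

include hpadd in
lemma coe_padd (n : ℕ) (v : Fin n → Bool) :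
    (p n v : ℝ) = (p (n+1) (Fin.snoc v false) : ℝ) + (p (n+1) (Fin.snoc v true) : ℝ) := by
  rw [hpadd n v]; push_cast; ring

include hp0 hpadd in
lemma mem_interval_dig {x : ℝ} (hx : x ∈ Ico (0:ℝ) 1) :
    ∀ n, x ∈ Ico (lep p n (dig p x n)) (lep p n (dig p x n) + (p n (dig p x n) : ℝ)) := by
  intro n
  induction n with
  | zero =>
    simpa [lep, hp0] using hx
  | succ n ih =>
    set v := dig p x n with hv
    have hd : dig p x (n+1) = Fin.snoc v
        (decide (lep p n v + (p (n+1) (Fin.snoc v false) : ℝ) ≤ x)) := rfl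
    by_cases hc : lep p n v + (p (n+1) (Fin.snoc v false) : ℝ) ≤ x
    · rw [hd, decide_eq_true hc, lep_snoc_true]
      refine ⟨hc, ?_⟩
      have := ih.2
      rw [coe_padd p hpadd n v] at this
      linarith
    · rw [hd, decide_eq_false hc, lep_snoc_false]
      refine ⟨ih.1, by linarith [not_le.mp hc]⟩

include hpadd in
lemma dig_eq_of_mem_interval {x : ℝ} :
    ∀ n (v : Fin n → Bool), x ∈ Ico (lep p n v) (lep p n v + (p n v : ℝ)) →
      dig p x n = v := by
  intro n
  induction n with
  | zero => intro v _; exact Subsingleton.elim _ _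
  | succ n ih =>
    intro w hw
    set v := Fin.init w with hv
    have hwv : w = Fin.snoc v (w (Fin.last n)) := (Fin.snoc_init_self w).symm
    have hmono : (p (n+1) (Fin.snoc v false) : ℝ) ≤ (p n v : ℝ) := by
      rw [coe_padd p hpadd n v]
      linarith [NNReal.coe_nonneg (p (n+1) (Fin.snoc v true))]
    have hxv : x ∈ Ico (lep p n v) (lep p n v + (p n v : ℝ)) := by
      cases hb : w (Fin.last n)
      · rw [hwv, hb, lep_snoc_false] at hw
        exact ⟨hw.1, lt_of_lt_of_le hw.2 (by linarith)⟩
      · rw [hwv, hb, lep_snoc_true] at hw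
        constructor
        · linarith [hw.1, NNReal.coe_nonneg (p (n+1) (Fin.snoc v false))]
        · have h2 := hw.2
          rw [coe_padd p hpadd n v]
          linarith
    have hdv : dig p x n = v := ih v hxv
    have hd : dig p x (n+1) = (Fin.snoc v
        (decide (lep p n v + (p (n+1) (Fin.snoc v false) : ℝ) ≤ x)) : Fin (n+1) → Bool) :=
      congrArg (fun u : Fin n → Bool =>
        (Fin.snoc u (decide (lep p n u + (p (n+1) (Fin.snoc u false) : ℝ) ≤ x)) :
          Fin (n+1) → Bool)) hdv
    rw [hd]
    refine snoc_eq_iff.mpr ⟨hv ▸ rfl, ?_⟩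
    cases hb : w (Fin.last n)
    · rw [hwv, hb, lep_snoc_false] at hw
      exact decide_eq_false (not_le.mpr hw.2)
    · rw [hwv, hb, lep_snoc_true] at hw
      exact decide_eq_true hw.1

include hp0 hpadd in
lemma lep_bounds : ∀ n (v : Fin n → Bool),
    0 ≤ lep p n v ∧ lep p n v + (p n v : ℝ) ≤ 1 := by
  intro n
  induction n with
  | zero => intro v; simp [lep, hp0]
  | succ n ih =>
    intro w
    set v := Fin.init w with hv
    have hwv : w = Fin.snoc v (w (Fin.last n)) := (Fin.snoc_init_self w).symm
    obtain ⟨h1, h2⟩ := ih v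
    have hnn : (0:ℝ) ≤ (p (n+1) (Fin.snoc v false) : ℝ) := (p _ _).coe_nonneg
    have hnn' : (0:ℝ) ≤ (p (n+1) (Fin.snoc v true) : ℝ) := (p _ _).coe_nonneg
    have hco := coe_padd p hpadd n v
    cases hb : w (Fin.last n)
    · rw [hwv, hb, lep_snoc_false]
      exact ⟨h1, by linarith⟩
    · rw [hwv, hb, lep_snoc_true]
      exact ⟨by linarith, by linarith⟩

include hp0 hpadd in
lemma dig_set_eq (n : ℕ) (v : Fin n → Bool) :
    ((fun x => dig p x n) ⁻¹' {v}) ∩ Ico (0:ℝ) 1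
      = Ico (lep p n v) (lep p n v + (p n v : ℝ)) := by
  ext x
  simp only [Set.mem_inter_iff, Set.mem_preimage, Set.mem_singleton_iff]
  constructor
  · rintro ⟨hdig, hx⟩
    have := mem_interval_dig p hp0 hpadd hx n
    rwa [show dig p x n = v from hdig] at this
  · intro hx
    obtain ⟨h1, h2⟩ := lep_bounds p hp0 hpadd n v
    have hx01 : x ∈ Ico (0:ℝ) 1 := ⟨le_trans h1 hx.1, lt_of_lt_of_le hx.2 h2⟩
    exact ⟨dig_eq_of_mem_interval p hpadd n v hx, hx01⟩

lemma measurable_dig : ∀ n, Measurable (fun x => dig p x n) := by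
  intro n
  induction n with
  | zero => exact measurable_const
  | succ n ih =>
    apply measurable_to_countable'
    intro w
    have hset : (fun x => dig p x (n+1)) ⁻¹' {w}
        = ((fun x => dig p x n) ⁻¹' {Fin.init w}) ∩
          {x : ℝ | decide (lep p n (Fin.init w)
            + (p (n+1) (Fin.snoc (Fin.init w) false) : ℝ) ≤ x) = w (Fin.last n)} := by
      ext x
      simp only [Set.mem_preimage, Set.mem_singleton_iff, Set.mem_inter_iff, Set.mem_setOf_eq]
      constructor
      · intro h
        have h' := snoc_eq_iff.mp
          (show (Fin.snoc (dig p x n) (decide (lep p n (dig p x n)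
            + (p (n+1) (Fin.snoc (dig p x n) false) : ℝ) ≤ x)) : Fin (n+1) → Bool) = w from h)
        refine ⟨h'.1, ?_⟩
        rw [← h'.1]
        exact h'.2
      · rintro ⟨h1, h2⟩
        exact snoc_eq_iff.mpr ⟨h1, by rw [h1]; exact h2⟩
    rw [hset]
    apply MeasurableSet.inter
    · exact ih (measurableSet_singleton _)
    · cases hb : w (Fin.last n)
      · simp only [decide_eq_false_iff_not, not_le]
        exact measurableSet_Iio
      · simp only [decide_eq_true_eq]
        exact measurableSet_Ici

lemma measurable_limF : Measurable (limF p) :=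
  measurable_pi_lambda _ fun n => (measurable_pi_apply _).comp (measurable_dig p (n+1))

/-- The candidate limit measure. -/
noncomputable def limitMeasure : Measure (ℕ → Bool) :=
  Measure.map (limF p) (volume.restrict (Ico (0:ℝ) 1))

instance : IsProbabilityMeasure (limitMeasure p) := by
  constructor
  rw [limitMeasure, Measure.map_apply (measurable_limF p) MeasurableSet.univ]
  simp [Real.volume_Ico]

include hp0 hpadd in
lemma limitMeasure_cylF (n : ℕ) (v : Fin n → Bool) :
    limitMeasure p (cylF v) = (p n v : ℝ≥0∞) := by
  rw [limitMeasure, Measure.map_apply (measurable_limF p) (measurableSet_cylF v)]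
  have hpre : limF p ⁻¹' cylF v = (fun x => dig p x n) ⁻¹' {v} := by
    ext x
    simp only [Set.mem_preimage, mem_cylF, Set.mem_singleton_iff, restr_limF]
  rw [hpre, Measure.restrict_apply ((measurable_dig p n) (measurableSet_singleton v)),
    dig_set_eq p hp0 hpadd n v, Real.volume_Ico, add_sub_cancel_left,
    ENNReal.ofReal_coe_nnreal]

end CantorAux
end B

section C
open MeasureTheory Filter Topology Set
open scoped ENNReal NNReal

namespace CantorAux

lemma restr_eq_of_restr_succ_eq {m : ℕ} {x y : ℕ → Bool}
    (h : restr (m + 1) y = restr (m + 1) x) : restr m y = restr m x := by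
  funext i
  have := congrFun h i.castSucc
  simpa [restr, Fin.coe_castSucc] using this

variable (p : (n : ℕ) → (Fin n → Bool) → ℝ≥0)
variable (hp0 : ∀ v : Fin 0 → Bool, p 0 v = 1)
variable (hpadd : ∀ (n : ℕ) (v : Fin n → Bool),
    p n v = p (n+1) (Fin.snoc v false) + p (n+1) (Fin.snoc v true))

/-- The limit probability measure. -/
noncomputable def limitPM : ProbabilityMeasure (ℕ → Bool) :=
  ⟨limitMeasure p, inferInstance⟩

include hp0 hpadd in
lemma tendsto_limitPM (μs : ℕ → ProbabilityMeasure (ℕ → Bool))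
    (hconv : ∀ n (v : Fin n → Bool),
      Tendsto (fun k => μs k (cylF v)) atTop (𝓝 (p n v))) :
    Tendsto μs atTop (𝓝 (limitPM p)) := by
  classical
  apply tendsto_of_forall_isOpen_le_liminf
  intro G hG
  -- the finite approximating families of cylinders
  set T : (m : ℕ) → Finset (Fin m → Bool) :=
    fun m => Finset.univ.filter (fun v : Fin m → Bool => cylF v ⊆ G) with hT
  set Gm : ℕ → Set (ℕ → Bool) := fun m => ⋃ v ∈ T m, cylF v with hGm
  have hGmG : ∀ m, Gm m ⊆ G := by
    intro m
    refine Set.iUnion₂_subset fun v hv => ?_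
    exact (Finset.mem_filter.mp hv).2
  have hmono : Monotone Gm := by
    apply monotone_nat_of_le_succ
    intro m x hx
    simp only [hGm, Set.mem_iUnion] at hx ⊢
    obtain ⟨v, hv, hxv⟩ := hx
    refine ⟨restr (m+1) x, ?_, rfl⟩
    rw [hT, Finset.mem_filter]
    refine ⟨Finset.mem_univ _, ?_⟩
    intro y hy
    have hyx : restr (m+1) y = restr (m+1) x := hy
    have : restr m y = restr m x := restr_eq_of_restr_succ_eq hyx
    apply (Finset.mem_filter.mp hv).2
    rw [mem_cylF, this]
    exact hxv
  have hunion : (⋃ m, Gm m) = G := by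
    apply Set.Subset.antisymm
    · exact Set.iUnion_subset hGmG
    · intro x hx
      obtain ⟨I, u, hIu, hsub⟩ := isOpen_pi_iff.mp hG x hx
      set m := (I.sup id) + 1 with hm
      have hIm : ∀ a ∈ I, a < m := by
        intro a ha
        have : a ≤ I.sup id := Finset.le_sup (f := id) ha
        omega
      have hcyl : cylF (restr m x) ⊆ G := by
        intro y hy
        apply hsub
        intro a ha
        have hya : y a = x a := by
          have := congrFun (show restr m y = restr m x from hy) ⟨a, hIm a ha⟩
          simpa [restr] using this
        rw [hya]
        exact (hIu a ha).2
      have hmem : restr m x ∈ T m := by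
        rw [hT]
        exact Finset.mem_filter.mpr ⟨Finset.mem_univ _, hcyl⟩
      exact Set.mem_iUnion.mpr ⟨m, Set.mem_iUnion₂.mpr ⟨restr m x, hmem, rfl⟩⟩
  -- the key ENNReal-level inequality
  have key : (limitPM p : Measure (ℕ → Bool)) G
      ≤ atTop.liminf (fun k => (μs k : Measure (ℕ → Bool)) G) := by
    have hL : (limitPM p : Measure (ℕ → Bool)) G
        = ⨆ m, (limitPM p : Measure (ℕ → Bool)) (Gm m) := by
      rw [← hunion]
      exact hmono.directed_le.measure_iUnion
    rw [hL]
    apply iSup_le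
    intro m
    have hdisj : (↑(T m) : Set (Fin m → Bool)).PairwiseDisjoint (fun v => cylF v) :=
      fun v _ w _ hvw => disjoint_cylF hvw
    have hsum : ∀ ν : Measure (ℕ → Bool), ν (Gm m) = ∑ v ∈ T m, ν (cylF v) := by
      intro ν
      rw [hGm]
      exact measure_biUnion_finset hdisj fun v _ => measurableSet_cylF v
    have htends : Tendsto (fun k => (μs k : Measure (ℕ → Bool)) (Gm m)) atTop
        (𝓝 ((limitPM p : Measure (ℕ → Bool)) (Gm m))) := by
      simp only [hsum]
      apply tendsto_finset_sum
      intro v _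
      have h1 : (limitPM p : Measure (ℕ → Bool)) (cylF v) = ((p m v : ℝ≥0) : ℝ≥0∞) :=
        limitMeasure_cylF p hp0 hpadd m v
      rw [h1]
      have h2 : ∀ k, (μs k : Measure (ℕ → Bool)) (cylF v) = ((μs k (cylF v) : ℝ≥0) : ℝ≥0∞) := by
        intro k
        simp [ProbabilityMeasure.ennreal_coeFn_eq_coeFn_toMeasure]
      simp only [h2]
      exact ENNReal.tendsto_coe.mpr (hconv m v)
    calc (limitPM p : Measure (ℕ → Bool)) (Gm m)
        = atTop.liminf (fun k => (μs k : Measure (ℕ → Bool)) (Gm m)) := htends.liminf_eq.symm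
      _ ≤ atTop.liminf (fun k => (μs k : Measure (ℕ → Bool)) G) :=
          liminf_le_liminf (Eventually.of_forall fun k => measure_mono (hGmG m))
  -- convert to the ℝ≥0 statement
  have aux : ((atTop.liminf (fun k => μs k G) : ℝ≥0) : ℝ≥0∞)
      = atTop.liminf (fun k => ((μs k G : ℝ≥0) : ℝ≥0∞)) := by
    refine Monotone.map_liminf_of_continuousAt (F := atTop) ENNReal.coe_mono
      (fun k => μs k G) ENNReal.continuous_coe.continuousAt ?_ ?_
    · exact IsBoundedUnder.isCoboundedUnder_ge ⟨1, by
        simp [eventually_map, ProbabilityMeasure.apply_le_one]⟩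
    · exact ⟨0, by simp⟩
  rw [← ENNReal.coe_le_coe, aux]
  simpa only [ProbabilityMeasure.ennreal_coeFn_eq_coeFn_toMeasure] using key

instance compactSpace_pm_cantor : CompactSpace (ProbabilityMeasure (ℕ → Bool)) := by
  letI : MetricSpace (ProbabilityMeasure (ℕ → Bool)) :=
    TopologicalSpace.metrizableSpaceMetric _
  rw [compactSpace_iff_seqCompactSpace]
  constructor
  intro μ _
  obtain ⟨φ, hφ, ps, hconv⟩ := exists_subseq_tendsto μ
  have hp0 : ∀ v : Fin 0 → Bool, ps 0 v = 1 := by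
    intro v
    have h1 : Tendsto (fun k => μ (φ k) (cylF v)) atTop (𝓝 1) := by
      have : ∀ k, μ (φ k) (cylF v) = 1 := by
        intro k
        rw [cylF_zero]
        exact (μ (φ k)).coeFn_univ
      simp only [this]
      exact tendsto_const_nhds
    exact tendsto_nhds_unique (hconv 0 v) h1
  have hpadd : ∀ (n : ℕ) (v : Fin n → Bool),
      ps n v = ps (n+1) (Fin.snoc v false) + ps (n+1) (Fin.snoc v true) := by
    intro n v
    have h1 : Tendsto (fun k => μ (φ k) (cylF v)) atTop
        (𝓝 (ps (n+1) (Fin.snoc v false) + ps (n+1) (Fin.snoc v true))) := by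
      have := (hconv (n+1) (Fin.snoc v false)).add (hconv (n+1) (Fin.snoc v true))
      simpa only [← apply_cylF_eq] using this
    exact tendsto_nhds_unique (hconv n v) h1
  exact ⟨limitPM ps, Set.mem_univ _, φ, hφ,
    tendsto_limitPM ps hp0 hpadd (fun k => μ (φ k)) hconv⟩

end CantorAux
end C

section D
open MeasureTheory Filter Topology Set
open scoped ENNReal NNReal

namespace CantorAux

/-- Interleaving map realizing `Cantor ≃ Cantor × Cantor`. -/
def itl (ω : ℕ → Bool) : (ℕ → Bool) × (ℕ → Bool) :=
  (fun n => ω (2 * n), fun n => ω (2 * n + 1))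

def unitl (q : (ℕ → Bool) × (ℕ → Bool)) : ℕ → Bool :=
  fun n => if n % 2 = 0 then q.1 (n / 2) else q.2 (n / 2)

lemma continuous_itl : Continuous itl := by
  apply Continuous.prodMk
  · exact continuous_pi fun n => continuous_apply _
  · exact continuous_pi fun n => continuous_apply _

lemma continuous_unitl : Continuous unitl := by
  apply continuous_pi
  intro n
  by_cases h : n % 2 = 0
  · simp only [unitl, h, if_true]
    exact (continuous_apply _).comp continuous_fst
  · simp only [unitl, h, if_false]
    exact (continuous_apply _).comp continuous_snd

lemma itl_unitl : itl ∘ unitl = id := by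
  funext q
  apply Prod.ext
  · funext n
    simp only [Function.comp_apply, itl, unitl, id_eq]
    have h1 : 2 * n % 2 = 0 := by omega
    have h2 : 2 * n / 2 = n := by omega
    rw [h1, h2]
    simp
  · funext n
    simp only [Function.comp_apply, itl, unitl, id_eq]
    have h1 : (2 * n + 1) % 2 = 1 := by omega
    have h2 : (2 * n + 1) / 2 = n := by omega
    rw [h1, h2]
    simp

lemma surjective_pm_map :
    Function.Surjective (fun ν : ProbabilityMeasure (ℕ → Bool) =>
      ν.map continuous_itl.measurable.aemeasurable) := by
  intro R
  refine ⟨R.map continuous_unitl.measurable.aemeasurable, ?_⟩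
  apply ProbabilityMeasure.toMeasure_injective
  simp only [ProbabilityMeasure.toMeasure_map]
  rw [Measure.map_map continuous_itl.measurable continuous_unitl.measurable, itl_unitl,
    Measure.map_id]

instance compactSpace_pm_prod :
    CompactSpace (ProbabilityMeasure ((ℕ → Bool) × (ℕ → Bool))) := by
  constructor
  rw [← surjective_pm_map.range_eq]
  exact isCompact_range (ProbabilityMeasure.continuous_map continuous_itl)

lemma isClosed_le_set :
    IsClosed {q : (ℕ → Bool) × (ℕ → Bool) | q.1 ≤ q.2} := by
  have : {q : (ℕ → Bool) × (ℕ → Bool) | q.1 ≤ q.2}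
      = ⋂ n, {q : (ℕ → Bool) × (ℕ → Bool) | q.1 n ≤ q.2 n} := by
    ext q
    simp only [Set.mem_setOf_eq, Set.mem_iInter]
    exact ⟨fun h n => h n, fun h n => h n⟩
  rw [this]
  refine isClosed_iInter fun n => ?_
  have hc : Continuous (fun q : (ℕ → Bool) × (ℕ → Bool) => (q.1 n, q.2 n)) :=
    ((continuous_apply n).comp continuous_fst).prodMk
      ((continuous_apply n).comp continuous_snd)
  have : {q : (ℕ → Bool) × (ℕ → Bool) | q.1 n ≤ q.2 n}
      = (fun q : (ℕ → Bool) × (ℕ → Bool) => (q.1 n, q.2 n)) ⁻¹' {y : Bool × Bool | y.1 ≤ y.2} :=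
    rfl
  rw [this]
  exact (isClosed_discrete _).preimage hc

end CantorAux
end D

section Main
open MeasureTheory Filter Topology Set CantorAux
open scoped ENNReal NNReal

theorem coupledBelow_isClosed_isCompact' (P : ProbabilityMeasure (ℕ → Bool)) :
    IsClosed {Q : ProbabilityMeasure (ℕ → Bool) |
        CoupledBelow (Q : Measure (ℕ → Bool)) (P : Measure (ℕ → Bool))} ∧
    IsCompact {Q : ProbabilityMeasure (ℕ → Bool) |
        CoupledBelow (Q : Measure (ℕ → Bool)) (P : Measure (ℕ → Bool))} := by
  set L : Set ((ℕ → Bool) × (ℕ → Bool)) := {q | q.1 ≤ q.2} with hLdef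
  set K : Set (ProbabilityMeasure ((ℕ → Bool) × (ℕ → Bool))) :=
    {R | R.map continuous_snd.measurable.aemeasurable = P ∧
      (R : Measure ((ℕ → Bool) × (ℕ → Bool))) L = 1} with hKdef
  have hK1 : IsClosed {R : ProbabilityMeasure ((ℕ → Bool) × (ℕ → Bool)) |
      R.map continuous_snd.measurable.aemeasurable = P} :=
    isClosed_singleton.preimage (ProbabilityMeasure.continuous_map continuous_snd)
  have hK2 : IsClosed {R : ProbabilityMeasure ((ℕ → Bool) × (ℕ → Bool)) |
      (R : Measure ((ℕ → Bool) × (ℕ → Bool))) L = 1} := by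
    apply IsSeqClosed.isClosed
    intro Rs R hmem hlim
    have h1 : atTop.limsup (fun n => (Rs n : Measure ((ℕ → Bool) × (ℕ → Bool))) L)
        ≤ (R : Measure ((ℕ → Bool) × (ℕ → Bool))) L :=
      ProbabilityMeasure.limsup_measure_closed_le_of_tendsto hlim isClosed_le_set
    have h2 : atTop.limsup (fun n => (Rs n : Measure ((ℕ → Bool) × (ℕ → Bool))) L) = 1 := by
      have : (fun n => (Rs n : Measure ((ℕ → Bool) × (ℕ → Bool))) L) = fun _ => 1 := by
        funext n
        exact hmem n
      rw [this, limsup_const]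
    exact le_antisymm prob_le_one (h2 ▸ h1)
  have hKclosed : IsClosed K := hK1.inter hK2
  have hKcompact : IsCompact K := hKclosed.isCompact
  have himg : {Q : ProbabilityMeasure (ℕ → Bool) |
        CoupledBelow (Q : Measure (ℕ → Bool)) (P : Measure (ℕ → Bool))}
      = (fun R : ProbabilityMeasure ((ℕ → Bool) × (ℕ → Bool)) =>
          R.map continuous_fst.measurable.aemeasurable) '' K := by
    ext Q
    constructor
    · rintro ⟨R, hprob, hfst, hsnd, hone⟩
      refine ⟨⟨R, hprob⟩, ⟨?_, hone⟩, ?_⟩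
      · apply ProbabilityMeasure.toMeasure_injective
        exact (ProbabilityMeasure.toMeasure_map _ _).trans hsnd
      · apply ProbabilityMeasure.toMeasure_injective
        exact (ProbabilityMeasure.toMeasure_map _ _).trans hfst
    · rintro ⟨R, ⟨hsnd, hone⟩, rfl⟩
      refine ⟨(R : Measure ((ℕ → Bool) × (ℕ → Bool))), R.prop, ?_, ?_, hone⟩
      · exact (ProbabilityMeasure.toMeasure_map R _).symm
      · have := congrArg ProbabilityMeasure.toMeasure hsnd
        rwa [ProbabilityMeasure.toMeasure_map] at this
  have hcomp : IsCompact {Q : ProbabilityMeasure (ℕ → Bool) |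
      CoupledBelow (Q : Measure (ℕ → Bool)) (P : Measure (ℕ → Bool))} := by
    rw [himg]
    exact hKcompact.image (ProbabilityMeasure.continuous_map continuous_fst)
  exact ⟨hcomp.isClosed, hcomp⟩

end Main

/-- For every Borel probability measure `P` on Cantor space, the class
`S_P = {Q : Q ≼ P}` is closed (hence compact) in the space of probability
measures with the topology of weak convergence. -/
theorem coupledBelow_isClosed_isCompact (P : ProbabilityMeasure (ℕ → Bool)) :
    IsClosed {Q : ProbabilityMeasure (ℕ → Bool) |
        CoupledBelow (Q : Measure (ℕ → Bool)) (P : Measure (ℕ → Bool))} ∧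
    IsCompact {Q : ProbabilityMeasure (ℕ → Bool) |
        CoupledBelow (Q : Measure (ℕ → Bool)) (P : Measure (ℕ → Bool))} := by
  exact coupledBelow_isClosed_isCompact' P
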